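/- Let n ≥ 1 be an integer, g, s ∈ EuclideanSpace ℝ (Fin n), σ > 0 a real, and B a self-adjoint continuous linear operator on EuclideanSpace ℝ (Fin n). Set χ = sup_{‖d‖=1} max(0, −⟨B d, d⟩). If ⟨g, s⟩ + (1/2)⟨B s, s⟩ + (σ/6)‖s‖³ ≤ 0, then ‖s‖ ≤ 2 · max( (6‖g‖/σ)^{1/2} , 3χ/σ ). -/

import Mathlib

open scoped InnerProductSpace

/-- Step-length bound for the cubic-regularized quadratic model with inexact Hessian. -/
theorem stmt_12 (n : ℕ) (hn : 1 ≤ n)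
    (g s : EuclideanSpace ℝ (Fin n)) (σ : ℝ) (hσ : 0 < σ)
    (B : EuclideanSpace ℝ (Fin n) →L[ℝ] EuclideanSpace ℝ (Fin n))
    (hB : IsSelfAdjoint B)
    (χ : ℝ)
    (hχ : χ = sSup {r : ℝ |
      ∃ d : EuclideanSpace ℝ (Fin n), ‖d‖ = 1 ∧ r = max 0 (-⟪B d, d⟫_ℝ)})
    (hdec : ⟪g, s⟫_ℝ + (1 / 2) * ⟪B s, s⟫_ℝ + (σ / 6) * ‖s‖ ^ 3 ≤ 0) :
    ‖s‖ ≤ 2 * max (Real.sqrt (6 * ‖g‖ / σ)) (3 * χ / σ) := by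
  set S := {r : ℝ | ∃ d : EuclideanSpace ℝ (Fin n), ‖d‖ = 1 ∧ r = max 0 (-⟪B d, d⟫_ℝ)}
  have hbdd : BddAbove S := by
    refine ⟨max 0 ‖B‖, ?_⟩
    rintro r ⟨d, hd, rfl⟩
    apply max_le_max le_rfl
    calc -⟪B d, d⟫_ℝ ≤ |⟪B d, d⟫_ℝ| := neg_le_abs _
      _ ≤ ‖B d‖ * ‖d‖ := abs_real_inner_le_norm _ _
      _ ≤ (‖B‖ * ‖d‖) * ‖d‖ := by
          exact mul_le_mul_of_nonneg_right (B.le_opNorm d) (norm_nonneg _)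
      _ = ‖B‖ := by rw [hd]; ring
  by_cases hs : s = 0
  · rw [hs]
    simp only [norm_zero]
    positivity
  have ht : 0 < ‖s‖ := norm_pos_iff.mpr hs
  set t := ‖s‖
  -- key curvature bound
  have hd1 : ‖(t⁻¹ : ℝ) • s‖ = 1 := by
    rw [norm_smul, norm_inv, Real.norm_eq_abs, abs_of_pos ht]
    field_simp
    rfl
  have hmem : max 0 (-⟪B ((t⁻¹ : ℝ) • s), (t⁻¹ : ℝ) • s⟫_ℝ) ∈ S := ⟨_, hd1, rfl⟩
  have hle : max 0 (-⟪B ((t⁻¹ : ℝ) • s), (t⁻¹ : ℝ) • s⟫_ℝ) ≤ χ := hχ ▸ le_csSup hbdd hmem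
  have hχ0 : 0 ≤ χ := le_trans (le_max_left _ _) hle
  have hinner : ⟪B ((t⁻¹ : ℝ) • s), (t⁻¹ : ℝ) • s⟫_ℝ = t⁻¹ * t⁻¹ * ⟪B s, s⟫_ℝ := by
    rw [map_smul, real_inner_smul_left, real_inner_smul_right]; ring
  have hcurv : -⟪B s, s⟫_ℝ ≤ χ * t ^ 2 := by
    have h1 : -⟪B ((t⁻¹ : ℝ) • s), (t⁻¹ : ℝ) • s⟫_ℝ ≤ χ := le_trans (le_max_right _ _) hle
    rw [hinner] at h1
    have := mul_le_mul_of_nonneg_left h1 (le_of_lt (mul_pos ht ht : (0:ℝ) < t * t))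
    have heq : t * t * -(t⁻¹ * t⁻¹ * ⟪B s, s⟫_ℝ) = -⟪B s, s⟫_ℝ := by
      field_simp
    rw [show χ * t ^ 2 = t * t * χ by ring, ← heq]
    exact this
  have hgs : -⟪g, s⟫_ℝ ≤ ‖g‖ * t := by
    calc -⟪g, s⟫_ℝ ≤ |⟪g, s⟫_ℝ| := neg_le_abs _
      _ ≤ ‖g‖ * ‖s‖ := abs_real_inner_le_norm _ _
  have hkey : σ * t ^ 3 ≤ 6 * ‖g‖ * t + 3 * χ * t ^ 2 := by nlinarith [hdec, hcurv, hgs]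
  set M := max (Real.sqrt (6 * ‖g‖ / σ)) (3 * χ / σ) with hM
  have hM0 : 0 ≤ M := le_trans (Real.sqrt_nonneg _) (le_max_left _ _)
  have hMsq : 6 * ‖g‖ / σ ≤ M ^ 2 := by
    have h1 : Real.sqrt (6 * ‖g‖ / σ) ≤ M := le_max_left _ _
    have h2 : Real.sqrt (6 * ‖g‖ / σ) ^ 2 = 6 * ‖g‖ / σ := by
      rw [Real.sq_sqrt]; positivity
    nlinarith [Real.sqrt_nonneg (6 * ‖g‖ / σ)]
  have hMχ : 3 * χ / σ ≤ M := le_max_right _ _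
  by_contra hcon
  push_neg at hcon
  -- t > 2M
  have ht2 : 2 * M < t := hcon
  have h6 : 6 * ‖g‖ ≤ σ * M ^ 2 := by
    have := mul_le_mul_of_nonneg_left hMsq (le_of_lt hσ)
    rwa [mul_div_cancel₀ _ (ne_of_gt hσ)] at this
  have h3 : 3 * χ ≤ σ * M := by
    have := mul_le_mul_of_nonneg_left hMχ (le_of_lt hσ)
    rwa [mul_div_cancel₀ _ (ne_of_gt hσ)] at this
  have hp1 : 0 < t + M := by linarith
  have hp2 : 0 < (t - 2*M) * (t + M) := mul_pos (by linarith) hp1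
  nlinarith [mul_le_mul_of_nonneg_right h6 ht.le, mul_le_mul_of_nonneg_right h3 (sq_nonneg t), mul_pos (mul_pos hσ ht) hp2, mul_nonneg (mul_pos hσ ht).le (sq_nonneg M)]
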